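/- Let V be a finite type, let E be an acyclic relation on V (no v with Relation.TransGen E v v), and let s, t ∈ V. Define E' by E' x y ↔ E x y ∨ (x = t ∧ y = s). Take atoms to be pairs in V × V, let A = {(v, u) | E' u v} ∪ {(s, s)}, and let R be the linear ground rule set containing, for every (v, u) ∈ V × V, the rule with body {(v, u)} and images {{(u, w)} | w ∈ V}. Let C be the union of all censors for A and R (the unique optimal censor). Then there exists u ∈ V with (t, u) ∈ C if and only if Relation.ReflTransGen E s t. -/
import Mathlib


/-- A ground rule: a finite body and a family of finite head images. -/
structure GroundRule (α : Type*) where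
  body : Finset α
  heads : Set (Finset α)

/-- A set of atoms `C` satisfies a ground rule `(B, Q)` if `B ⊆ C` implies
that `I ⊆ C` for some `I ∈ Q`. -/
def RuleSat {α : Type*} (C : Set α) (r : GroundRule α) : Prop :=
  ↑r.body ⊆ C → ∃ I ∈ r.heads, ↑I ⊆ C

/-- `C` satisfies a set of ground rules if it satisfies every rule in it. -/
def SatisfiesSet {α : Type*} (C : Set α) (R : Set (GroundRule α)) : Prop :=
  ∀ r ∈ R, RuleSat C r

/-- A censor for an ambient set `A` and rules `R` is a subset of `A` satisfying `R`. -/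
def Censor {α : Type*} (A : Set α) (R : Set (GroundRule α)) (C : Set α) : Prop :=
  C ⊆ A ∧ SatisfiesSet C R

/-- An optimal censor is a censor that is maximal w.r.t. set inclusion. -/
def OptimalCensor {α : Type*} (A : Set α) (R : Set (GroundRule α)) (C : Set α) : Prop :=
  Censor A R C ∧ ∀ C', Censor A R C' → C ⊆ C' → C' = C

/-- correctness of the reduction from st-reachability in a DAG to
IGA-entailment for the linear policy of the paper's Theorem 2. -/
theorem stmt6 {V : Type*} [Fintype V] (E : V → V → Prop)
    (hacyc : ∀ v, ¬ Relation.TransGen E v v) (s t : V) :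
    let E' : V → V → Prop := fun x y => E x y ∨ (x = t ∧ y = s)
    let A : Set (V × V) := {p | E' p.2 p.1} ∪ {(s, s)}
    let R : Set (GroundRule (V × V)) :=
      {r | ∃ v u : V,
        r = ⟨({(v, u)} : Finset (V × V)), {I | ∃ w : V, I = ({(u, w)} : Finset (V × V))}⟩}
    (∃ u, (t, u) ∈ ⋃₀ {C | Censor A R C}) ↔ Relation.ReflTransGen E s t := by
  intro E' A R
  classical
  constructor
  · rintro ⟨u₀, C, hC, htu⟩
    by_contra hst
    set E'' : V → V → Prop := fun x y => E x y ∨ (x = t ∧ y = s) ∨ (x = s ∧ y = s) with hE''def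
    have L : ∀ a b : V, Relation.ReflTransGen E'' a b →
        Relation.ReflTransGen E a b ∨ Relation.ReflTransGen E s b := by
      intro a b h
      induction h with
      | refl => exact Or.inl .refl
      | tail _ e ih =>
        rcases e with e | ⟨_, rfl⟩ | ⟨_, rfl⟩
        · rcases ih with ih | ih
          · exact Or.inl (ih.tail e)
          · exact Or.inr (ih.tail e)
        · exact Or.inr .refl
        · exact Or.inr .refl
    have hstep : ∀ q : V × V, q ∈ C → ∃ w, (q.2, w) ∈ C := by
      intro q hq
      have hr : (⟨({(q.1, q.2)} : Finset (V × V)),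
          {I | ∃ w : V, I = ({(q.2, w)} : Finset (V × V))}⟩ : GroundRule (V × V)) ∈ R :=
        ⟨q.1, q.2, rfl⟩
      have := hC.2 _ hr (by simpa using hq)
      obtain ⟨I, ⟨w, rfl⟩, hI⟩ := this
      exact ⟨w, hI (by simp)⟩
    choose F hF using hstep
    let g : V × V → V × V := fun q => if h : q ∈ C then (q.2, F q h) else q
    let p : ℕ → V × V := fun n => g^[n] (t, u₀)
    have hpsucc : ∀ n, p (n + 1) = g (p n) := fun n => Function.iterate_succ_apply' g n _
    have hmem : ∀ n, p n ∈ C := by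
      intro n
      induction n with
      | zero => exact htu
      | succ n ih =>
        rw [hpsucc]
        simp only [g, dif_pos ih]
        exact hF (p n) ih
    let f : ℕ → V := fun n => (p n).1
    have hfst : ∀ n, f (n + 1) = (p n).2 := by
      intro n
      show (p (n + 1)).1 = _
      rw [hpsucc]
      simp [g, dif_pos (hmem n)]
    have hedge : ∀ n, E'' (f (n + 1)) (f n) := by
      intro n
      have hA := hC.1 (hmem n)
      rw [hfst]
      rcases hA with h | h
      · rcases h with h | ⟨h1, h2⟩
        · exact Or.inl h
        · exact Or.inr (Or.inl ⟨h1, h2⟩)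
      · have h' : p n = (s, s) := h
        rw [show (p n).2 = s from by rw [h'], show f n = s from congrArg Prod.fst h']
        exact Or.inr (Or.inr ⟨rfl, rfl⟩)
    have hchain : ∀ n, Relation.ReflTransGen E'' (f n) t := by
      intro n
      induction n with
      | zero => exact .refl
      | succ n ih => exact .head (hedge n) ih
    have hE : ∀ n, E (f (n + 1)) (f n) := by
      intro n
      rcases hedge n with h | ⟨_, h2⟩ | ⟨_, h2⟩
      · exact h
      all_goals {
        exfalso
        have hc := hchain n
        rw [h2] at hc
        rcases L _ _ hc with h | h <;> exact hst h }
    have htg : ∀ i d : ℕ, Relation.TransGen E (f (i + d + 1)) (f i) := by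
      intro i d
      induction d with
      | zero => exact .single (hE i)
      | succ d ih => exact .head (hE (i + d + 1)) ih
    obtain ⟨i, j, hne, heq⟩ := Finite.exists_ne_map_eq_of_infinite f
    rcases hne.lt_or_gt with h | h
    · obtain ⟨d, rfl⟩ := Nat.exists_eq_add_of_lt h
      exact hacyc (f i) (heq ▸ htg i d)
    · obtain ⟨d, rfl⟩ := Nat.exists_eq_add_of_lt h
      exact hacyc (f j) (heq ▸ htg j d)
  · intro hst
    let C₀ : Set (V × V) :=
      {p | E p.2 p.1 ∧ Relation.ReflTransGen E s p.2 ∧ Relation.ReflTransGen E p.1 t} ∪ {(s, t)}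
    have hCensor : Censor A R C₀ := by
      constructor
      · rintro ⟨v, u⟩ (⟨he, -, -⟩ | h)
        · exact Or.inl (Or.inl he)
        · have hv : v = s := congrArg Prod.fst h
          have hu : u = t := congrArg Prod.snd h
          subst hv; subst hu
          exact Or.inl (Or.inr ⟨rfl, rfl⟩)
      · rintro r ⟨v, u, rfl⟩ hbody
        have hvu : (v, u) ∈ C₀ := hbody (by simp)
        suffices h : ∃ w, (u, w) ∈ C₀ by
          obtain ⟨w, hw⟩ := h
          exact ⟨{(u, w)}, ⟨w, rfl⟩, by simpa using hw⟩
        rcases hvu with ⟨he, hsu, hvt⟩ | h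
        · rcases hsu.cases_tail with rfl | ⟨w, hsw, hwu⟩
          · exact ⟨t, Or.inr rfl⟩
          · exact ⟨w, Or.inl ⟨hwu, hsw, Relation.ReflTransGen.head he hvt⟩⟩
        · have hu : u = t := congrArg Prod.snd h
          subst hu
          rcases hst.cases_tail with heq | ⟨w, hsw, hwt⟩
          · exact ⟨u, Or.inr (by rw [heq]; rfl)⟩
          · exact ⟨w, Or.inl ⟨hwt, hsw, .refl⟩⟩
    rcases hst.cases_tail with heq | ⟨w, hsw, hwt⟩
    · exact ⟨t, Set.mem_sUnion.2 ⟨C₀, hCensor, Or.inr (by rw [heq]; rfl)⟩⟩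
    · exact ⟨w, Set.mem_sUnion.2 ⟨C₀, hCensor, Or.inl ⟨hwt, hsw, .refl⟩⟩⟩
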